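/- Let G = (L, Σ, δ, O) be a POMDP, T ⊆ L, and l ∈ L. If there exists an observation-based strategy that is almost-sure winning for Safe(T) from l, then there exists a pure observation-based finite-memory strategy with memory of size at most 2^{|L|} that is almost-sure winning for Safe(T) from l. -/

import Mathlib

open scoped ENNReal

/-- A partially-observable Markov decision process (POMDP) with states `L`,
actions `A` and observations `O`: a probabilistic transition function and an
observation function (the observations partition the state space). -/
structure POMDP (L : Type) (A : Type) (O : Type) where
  δ : L → A → PMF L
  obs : L → O

namespace POMDP

variable {L A O : Type}

/-- A (randomized) strategy: given the initial state and the history of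
(action, state) steps played so far, it chooses a distribution on actions. -/
abbrev Strategy (L A : Type) := L → List (A × L) → PMF A

/-- The sequence of states visited along a finite prefix. -/
def statesOf (l : L) (h : List (A × L)) : List L := l :: h.map Prod.snd

/-- Auxiliary probability of a finite prefix, for a strategy `π` given as a
function of the remaining history. -/
noncomputable def prefProbAux (M : POMDP L A O) :
    (List (A × L) → PMF A) → L → List (A × L) → ℝ≥0∞
  | _, _, [] => 1
  | π, l, (a, l') :: h =>
      π [] a * M.δ l a l' * M.prefProbAux (fun h' => π ((a, l') :: h')) l' h

/-- The probability, under strategy `α` from state `l`, that the play starts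
with the finite prefix `h` of (action, state) steps. -/
noncomputable def prefProb (M : POMDP L A O) (α : Strategy L A) (l : L)
    (h : List (A × L)) : ℝ≥0∞ :=
  M.prefProbAux (α l) l h

/-- A prefix is consistent with `α` from `l` if it has positive probability. -/
def Consistent (M : POMDP L A O) (α : Strategy L A) (l : L) (h : List (A × L)) : Prop :=
  0 < M.prefProb α l h

/-- The probability, under strategy `α` from state `l`, that the length-`n`
prefix of the play satisfies the predicate `P`. -/
noncomputable def horizonProb (M : POMDP L A O) [Fintype L] [Fintype A]
    (α : Strategy L A) (l : L) (n : ℕ) (P : List (A × L) → Prop) : ℝ≥0∞ :=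
  ∑ f : Fin n → A × L,
    Set.indicator {g : Fin n → A × L | P (List.ofFn g)}
      (fun g => M.prefProb α l (List.ofFn g)) f

/-- `Pr_l^α(Reach(T))`: probability that the play visits a state of `T`
(as the increasing limit of the finite-horizon reachability probabilities). -/
noncomputable def reachProb (M : POMDP L A O) [Fintype L] [Fintype A]
    (α : Strategy L A) (l : L) (T : Set L) : ℝ≥0∞ :=
  ⨆ n, M.horizonProb α l n (fun h => ∃ s ∈ statesOf l h, s ∈ T)

/-- `Pr_l^α(Safe(T))`: probability that all states of the play lie in `T`
(as the decreasing limit of the finite-horizon safety probabilities). -/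
noncomputable def safeProb (M : POMDP L A O) [Fintype L] [Fintype A]
    (α : Strategy L A) (l : L) (T : Set L) : ℝ≥0∞ :=
  ⨅ n, M.horizonProb α l n (fun h => ∀ s ∈ statesOf l h, s ∈ T)

/-- `Pr_l^α(Until(T₁,T₂))`: probability that the play visits `T₂` at some
position `k` with all positions `≤ k` in `T₁`. -/
noncomputable def untilProb (M : POMDP L A O) [Fintype L] [Fintype A]
    (α : Strategy L A) (l : L) (T₁ T₂ : Set L) : ℝ≥0∞ :=
  ⨆ n, M.horizonProb α l n (fun h => ∃ k, ∃ hk : k < (statesOf l h).length,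
      (statesOf l h).get ⟨k, hk⟩ ∈ T₂ ∧
      ∀ j, ∀ hj : j < (statesOf l h).length, j ≤ k → (statesOf l h).get ⟨j, hj⟩ ∈ T₁)

/-- `Pr_l^α(coBüchi(T))`: probability that from some point on all states of
the play lie in `T`. -/
noncomputable def coBuchiProb (M : POMDP L A O) [Fintype L] [Fintype A]
    (α : Strategy L A) (l : L) (T : Set L) : ℝ≥0∞ :=
  ⨆ k, ⨅ n, M.horizonProb α l n (fun h =>
    ∀ j, ∀ hj : j < (statesOf l h).length, k ≤ j → (statesOf l h).get ⟨j, hj⟩ ∈ T)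

/-- `Pr_l^α(Büchi(T))`: probability that the play visits `T` infinitely often. -/
noncomputable def buchiProb (M : POMDP L A O) [Fintype L] [Fintype A]
    (α : Strategy L A) (l : L) (T : Set L) : ℝ≥0∞ :=
  ⨅ k, ⨆ n, M.horizonProb α l n (fun h =>
    ∃ j, ∃ hj : j < (statesOf l h).length, k ≤ j ∧ (statesOf l h).get ⟨j, hj⟩ ∈ T)

/-- A strategy is observation-based if it plays the same distribution after any
two prefixes with the same sequences of observations and of actions. -/
def ObservationBased (M : POMDP L A O) (α : Strategy L A) : Prop :=
  ∀ l l' (h h' : List (A × L)), M.obs l = M.obs l' →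
    h.map Prod.fst = h'.map Prod.fst →
    h.map (fun p => M.obs p.2) = h'.map (fun p => M.obs p.2) →
    α l h = α l' h'

/-- A strategy is pure if it always plays a Dirac distribution. -/
def PureStrategy (α : Strategy L A) : Prop := ∀ l h, ∃ a, α l h = PMF.pure a

/-- Edge of the underlying graph of the POMDP. -/
def Edge (M : POMDP L A O) (l l' : L) : Prop := ∃ a, 0 < M.δ l a l'

/-- Reachability in the underlying graph of the POMDP. -/
def ReachableFrom (M : POMDP L A O) (l l' : L) : Prop :=
  Relation.ReflTransGen M.Edge l l'

/-- The memory state reached by a memory-update function `u` (together with the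
current state) after running through a prefix. -/
def memRun (M : POMDP L A O) {Mem : Type} (u : Mem → O → A → Mem) :
    Mem → L → List (A × L) → Mem × L
  | m, l, [] => (m, l)
  | m, l, (a, l') :: h => M.memRun u (u m (M.obs l) a) l' h

/-- The (observation-based) strategy induced by a finite-memory machine given by
memory-update function `u`, next-action function `next` and initial memory `m0`. -/
def fmStrategy (M : POMDP L A O) {Mem : Type} (u : Mem → O → A → Mem)
    (next : Mem → O → PMF A) (m0 : Mem) : Strategy L A :=
  fun l h =>
    let p := M.memRun u m0 l h
    next p.1 (M.obs p.2)

/-- The distribution choosing `x` and `y` with probability 1/2 each. -/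
noncomputable def half (x y : L) : PMF L :=
  (PMF.uniformOfFintype Bool).map (fun b => if b then x else y)

end POMDP

namespace POMDP

variable {L A O : Type}

/-- Last state of a history starting at `l`. -/
def lastState : L → List (A × L) → L
  | l, [] => l
  | _, (_, l') :: h => lastState l' h

lemma lastState_append_singleton (l : L) (h : List (A × L)) (a : A) (y : L) :
    lastState l (h ++ [(a, y)]) = y := by
  induction h generalizing l with
  | nil => rfl
  | cons p t ih => exact ih p.2

lemma lastState_mem_statesOf (l : L) (h : List (A × L)) :
    lastState l h ∈ statesOf l h := by
  induction h generalizing l with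
  | nil => simp [statesOf, lastState]
  | cons p t ih =>
    rcases p with ⟨a, l'⟩
    have := ih l'
    simp only [statesOf, lastState, List.map_cons, List.mem_cons] at this ⊢
    tauto

lemma statesOf_append_singleton (l : L) (h : List (A × L)) (a : A) (y : L) :
    statesOf l (h ++ [(a, y)]) = statesOf l h ++ [y] := by
  simp [statesOf]

lemma prefProbAux_append (M : POMDP L A O) :
    ∀ (h₁ h₂ : List (A × L)) (π : List (A × L) → PMF A) (l : L),
      M.prefProbAux π l (h₁ ++ h₂) =
        M.prefProbAux π l h₁ *
          M.prefProbAux (fun h => π (h₁ ++ h)) (lastState l h₁) h₂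
  | [], h₂, π, l => by simp [prefProbAux, lastState]
  | (a, l') :: t, h₂, π, l => by
    simp only [List.cons_append, prefProbAux]
    rw [prefProbAux_append M t h₂]
    simp only [lastState, mul_assoc]

lemma prefProb_snoc (M : POMDP L A O) (α : Strategy L A) (l : L)
    (h : List (A × L)) (a : A) (y : L) :
    M.prefProb α l (h ++ [(a, y)]) =
      M.prefProb α l h * (α l h a * M.δ (lastState l h) a y) := by
  unfold prefProb
  rw [prefProbAux_append]
  congr 1
  simp [prefProbAux]

lemma consistent_nil (M : POMDP L A O) (α : Strategy L A) (l : L) :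
    M.Consistent α l [] := by
  simp [Consistent, prefProb, prefProbAux]

lemma consistent_snoc_iff (M : POMDP L A O) (α : Strategy L A) (l : L)
    (h : List (A × L)) (a : A) (y : L) :
    M.Consistent α l (h ++ [(a, y)]) ↔
      M.Consistent α l h ∧ 0 < α l h a ∧ 0 < M.δ (lastState l h) a y := by
  simp only [Consistent, prefProb_snoc, pos_iff_ne_zero, ne_eq, mul_eq_zero]
  tauto

end POMDP
namespace POMDP

variable {L A O : Type}

lemma sum_prefProbAux (M : POMDP L A O) [Fintype L] [Fintype A] :
    ∀ (n : ℕ) (π : List (A × L) → PMF A) (l : L),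
      ∑ f : Fin n → A × L, M.prefProbAux π l (List.ofFn f) = 1
  | 0, π, l => by simp [prefProbAux]
  | n + 1, π, l => by
    rw [← (Fin.consEquiv (fun _ : Fin (n + 1) => A × L)).sum_comp
      (fun f => M.prefProbAux π l (List.ofFn f))]
    have hofn : ∀ (p : (A × L) × (Fin n → A × L)),
        List.ofFn ((Fin.consEquiv (fun _ : Fin (n + 1) => A × L)) p) = p.1 :: List.ofFn p.2 := by
      intro p
      simp [List.ofFn_succ, Fin.consEquiv]
    simp only [hofn]
    rw [Fintype.sum_prod_type]
    have inner : ∀ x : A × L,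
        ∑ f : Fin n → A × L, M.prefProbAux π l (x :: List.ofFn f)
          = (π []) x.1 * (M.δ l x.1) x.2 := by
      intro x
      rcases x with ⟨a, l'⟩
      simp only [prefProbAux]
      rw [← Finset.mul_sum, sum_prefProbAux M n, mul_one]
    simp only [inner]
    rw [Fintype.sum_prod_type]
    have h1 : ∀ a : A, ∑ y : L, (π []) a * (M.δ l a) y = (π []) a := by
      intro a
      rw [← Finset.mul_sum]
      have : ∑ y : L, (M.δ l a) y = 1 := by
        rw [← tsum_fintype (L := .unconditional _)]; exact (M.δ l a).tsum_coe
      rw [this, mul_one]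
    simp only [h1]
    rw [← tsum_fintype (L := .unconditional _)]; exact (π []).tsum_coe

lemma sum_prefProb (M : POMDP L A O) [Fintype L] [Fintype A]
    (α : Strategy L A) (l : L) (n : ℕ) :
    ∑ f : Fin n → A × L, M.prefProb α l (List.ofFn f) = 1 :=
  M.sum_prefProbAux n (α l) l

lemma horizonProb_eq_one (M : POMDP L A O) [Fintype L] [Fintype A]
    (α : Strategy L A) (l : L) (n : ℕ) (P : List (A × L) → Prop)
    (hP : ∀ h : List (A × L), M.Consistent α l h → P h) :
    M.horizonProb α l n P = 1 := by
  unfold horizonProb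
  have key : ∀ f : Fin n → A × L,
      Set.indicator {g : Fin n → A × L | P (List.ofFn g)}
        (fun g => M.prefProb α l (List.ofFn g)) f = M.prefProb α l (List.ofFn f) := by
    intro f
    by_cases hf : f ∈ {g : Fin n → A × L | P (List.ofFn g)}
    · rw [Set.indicator_of_mem hf]
    · rw [Set.indicator_of_notMem hf]
      by_contra hne
      have hc : M.Consistent α l (List.ofFn f) := by
        simp only [Consistent, pos_iff_ne_zero]
        exact fun h0 => hne h0.symm
      exact hf (hP _ hc)
  simp only [key]
  exact M.sum_prefProb α l n

/-- Almost-sure safety implies sure safety: every consistent prefix stays in `T`. -/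
lemma consistent_safe (M : POMDP L A O) [Fintype L] [Fintype A]
    (α : Strategy L A) (l : L) (T : Set L) (hsafe : M.safeProb α l T = 1)
    (h : List (A × L)) (hc : M.Consistent α l h) :
    ∀ s ∈ statesOf l h, s ∈ T := by
  classical
  by_contra hbad
  push_neg at hbad
  set n := h.length with hn
  set fh : Fin n → A × L := fun i => h.get i with hfh
  have hofn : List.ofFn fh = h := List.ofFn_get h
  set S : Set (Fin n → A × L) :=
    {g : Fin n → A × L | ∀ s ∈ statesOf l (List.ofFn g), s ∈ T} with hS
  set F : (Fin n → A × L) → ℝ≥0∞ := fun g => M.prefProb α l (List.ofFn g) with hF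
  have hfhS : fh ∉ S := by
    simp only [hS, Set.mem_setOf_eq, hofn]
    push_neg
    exact hbad
  have h1 : (1 : ℝ≥0∞) ≤ M.horizonProb α l n (fun h => ∀ s ∈ statesOf l h, s ∈ T) := by
    rw [← hsafe]
    exact iInf_le _ n
  have e1 : M.horizonProb α l n (fun h => ∀ s ∈ statesOf l h, s ∈ T)
      = ∑ f ∈ Finset.univ.erase fh, S.indicator F f := by
    unfold horizonProb
    exact (Finset.sum_erase _ (Set.indicator_of_notMem hfhS F)).symm
  have e2 : ∑ f ∈ Finset.univ.erase fh, S.indicator F f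
      ≤ ∑ f ∈ Finset.univ.erase fh, F f :=
    Finset.sum_le_sum fun i _ => Set.indicator_le_self _ _ i
  have e3 : ∑ f ∈ Finset.univ.erase fh, F f + F fh = ∑ f : Fin n → A × L, F f :=
    Finset.sum_erase_add _ _ (Finset.mem_univ fh)
  have e4 : (1 : ℝ≥0∞) + F fh ≤ 1 := by
    calc (1 : ℝ≥0∞) + F fh
        ≤ ∑ f ∈ Finset.univ.erase fh, S.indicator F f + F fh := by
          rw [e1] at h1; exact add_le_add_left h1 _
      _ ≤ ∑ f ∈ Finset.univ.erase fh, F f + F fh := add_le_add_left e2 _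
      _ = ∑ f : Fin n → A × L, F f := e3
      _ = 1 := M.sum_prefProb α l n
  have hpos : 0 < F fh := by rw [hF]; simpa [hofn, Consistent] using hc
  exact absurd (lt_of_lt_of_le (ENNReal.lt_add_right ENNReal.one_ne_top (ne_of_gt hpos)) e4)
    (lt_irrefl _)

end POMDP
namespace POMDP

variable {L A O : Type}

/-- Signature (action/observation sequence) of a history. -/
def sigOf (M : POMDP L A O) (h : List (A × L)) : List (A × O) :=
  h.map (fun p => (p.1, M.obs p.2))

lemma sigOf_append_singleton (M : POMDP L A O) (h : List (A × L)) (a : A) (y : L) :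
    M.sigOf (h ++ [(a, y)]) = M.sigOf h ++ [(a, M.obs y)] := by
  simp [sigOf]

lemma obs_eq_of_sig (M : POMDP L A O) {α : Strategy L A} (hα : M.ObservationBased α)
    (l : L) {h h' : List (A × L)} (e : M.sigOf h = M.sigOf h') : α l h = α l h' := by
  apply hα l l h h' rfl
  · have := congrArg (List.map Prod.fst) e
    simpa [sigOf, List.map_map, Function.comp_def] using this
  · have := congrArg (List.map Prod.snd) e
    simpa [sigOf, List.map_map, Function.comp_def] using this

/-- States reachable, consistently with `α` from `l`, along a given signature. -/
def ReachA (M : POMDP L A O) (α : Strategy L A) (l : L) (s : List (A × O)) : Set L :=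
  {x | ∃ h, M.sigOf h = s ∧ M.Consistent α l h ∧ lastState l h = x}

open Classical in
noncomputable def postF (M : POMDP L A O) [Fintype L] (B : Finset L) (a : A) : Finset L :=
  Finset.univ.filter fun y => ∃ x ∈ B, 0 < M.δ x a y

open Classical in
noncomputable def updF (M : POMDP L A O) [Fintype L] (m : Finset L) (o : O) (a : A) :
    Finset L :=
  M.postF (m.filter fun x => M.obs x = o) a

def GoodAct (M : POMDP L A O) (α : Strategy L A) (l : L) (P : Finset L) (a : A) : Prop :=
  ∃ h, M.Consistent α l h ∧ M.ReachA α l (M.sigOf h) = ↑P ∧ a ∈ (α l h).support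

open Classical in
noncomputable def act (M : POMDP L A O) (α : Strategy L A) (l : L) [Nonempty A]
    (P : Finset L) : A :=
  if hP : ∃ a, M.GoodAct α l P a then hP.choose else Classical.arbitrary A

lemma act_spec (M : POMDP L A O) (α : Strategy L A) (l : L) [Nonempty A]
    {P : Finset L} (hP : ∃ a, M.GoodAct α l P a) : M.GoodAct α l P (M.act α l P) := by
  rw [act, dif_pos hP]
  exact hP.choose_spec

lemma memRun_snd (M : POMDP L A O) {Mem : Type} (u : Mem → O → A → Mem) :
    ∀ (h : List (A × L)) (m : Mem) (l : L), (M.memRun u m l h).2 = lastState l h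
  | [], m, l => rfl
  | (a, l') :: t, m, l => memRun_snd M u t _ l'

lemma memRun_snoc (M : POMDP L A O) {Mem : Type} (u : Mem → O → A → Mem) :
    ∀ (h : List (A × L)) (m : Mem) (l : L) (a : A) (y : L),
      M.memRun u m l (h ++ [(a, y)]) =
        (u (M.memRun u m l h).1 (M.obs (M.memRun u m l h).2) a, y)
  | [], m, l, a, y => rfl
  | (b, l') :: t, m, l, a, y => by
      simp only [List.cons_append, memRun]
      exact memRun_snoc M u t _ l' a y

lemma memRun_congr (M : POMDP L A O) {Mem : Type} (u : Mem → O → A → Mem) :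
    ∀ (h h' : List (A × L)) (m : Mem) (l l' : L),
      M.obs l = M.obs l' → h.map Prod.fst = h'.map Prod.fst →
      h.map (fun p => M.obs p.2) = h'.map (fun p => M.obs p.2) →
      (M.memRun u m l h).1 = (M.memRun u m l' h').1 ∧
        M.obs (M.memRun u m l h).2 = M.obs (M.memRun u m l' h').2 := by
  intro h
  induction h with
  | nil =>
    intro h' m l l' ho hf hs
    cases h' with
    | nil => exact ⟨rfl, ho⟩
    | cons p t => simp at hf
  | cons p t ih =>
    intro h' m l l' ho hf hs
    cases h' with
    | nil => simp at hf
    | cons p' t' =>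
      simp only [List.map_cons, List.cons.injEq] at hf hs
      simp only [memRun]
      rw [hf.1, ho]
      exact ih t' _ p.2 p'.2 hs.1 hf.2 hs.2

lemma fmStrategy_observationBased (M : POMDP L A O) {Mem : Type}
    (u : Mem → O → A → Mem) (next : Mem → O → PMF A) (m0 : Mem) :
    M.ObservationBased (M.fmStrategy u next m0) := by
  intro l l' h h' ho hf hs
  obtain ⟨e1, e2⟩ := memRun_congr M u h h' m0 l l' ho hf hs
  simp only [fmStrategy]
  rw [e1, e2]

end POMDP
namespace POMDP

variable {L A O : Type}

lemma mem_postF (M : POMDP L A O) [Fintype L] {B : Finset L} {a : A} {y : L} :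
    y ∈ M.postF B a ↔ ∃ x ∈ B, 0 < M.δ x a y := by
  simp [postF]

open Classical in
noncomputable def nextF (M : POMDP L A O) [Fintype L] (α : Strategy L A) (l : L)
    [Nonempty A] : Finset L → O → A :=
  fun m o => M.act α l (m.filter fun x => M.obs x = o)

noncomputable def betaS (M : POMDP L A O) [Fintype L] (α : Strategy L A) (l : L)
    [Nonempty A] : Strategy L A :=
  M.fmStrategy M.updF (fun m o => PMF.pure (M.nextF α l m o)) ({l} : Finset L)

open Classical in
lemma invariant (M : POMDP L A O) [Fintype L] [Fintype A] [Nonempty A]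
    (α : Strategy L A) (hα : M.ObservationBased α) (l : L) (T : Set L)
    (hsafe : M.safeProb α l T = 1) :
    ∀ h : List (A × L), M.Consistent (M.betaS α l) l h →
      (∃ h', M.Consistent α l h' ∧
          M.ReachA α l (M.sigOf h') =
            ↑(((M.memRun M.updF ({l} : Finset L) l h).1).filter
                fun z => M.obs z = M.obs (lastState l h)) ∧
          lastState l h ∈ ((M.memRun M.updF ({l} : Finset L) l h).1).filter
                fun z => M.obs z = M.obs (lastState l h)) ∧
      (∀ s ∈ statesOf l h, s ∈ T) := by
  intro h
  induction h using List.reverseRecOn with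
  | nil =>
    intro _
    have hlT : l ∈ T := by
      have := M.consistent_safe α l T hsafe [] (M.consistent_nil α l)
      simpa [statesOf] using this
    constructor
    · refine ⟨[], M.consistent_nil α l, ?_, ?_⟩
      · have hfil : (({l} : Finset L).filter
            fun z => M.obs z = M.obs (lastState l ([] : List (A × L)))) = {l} := by
          simp [lastState, Finset.filter_singleton]
          ext z; constructor
          · intro h; exact (Finset.mem_filter.mp h).1
          · intro hz; rw [Finset.mem_singleton.mp hz]; exact Finset.mem_filter.mpr ⟨Finset.mem_singleton_self _, rfl⟩
        show M.ReachA α l (M.sigOf []) = _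
        rw [show (M.memRun M.updF ({l} : Finset L) l []) = ({l}, l) from rfl]
        rw [hfil]
        ext z
        simp only [ReachA, sigOf, Set.mem_setOf_eq, Finset.coe_singleton,
          Set.mem_singleton_iff, List.map_nil, List.map_eq_nil_iff]
        constructor
        · rintro ⟨h'', rfl, _, h3⟩
          exact h3.symm
        · intro hz
          exact ⟨[], rfl, M.consistent_nil α _, hz.symm⟩
      · simp [memRun, lastState]
        exact Finset.mem_filter.mpr ⟨Finset.mem_singleton_self _, rfl⟩
    · intro s hs
      simp only [statesOf, List.map_nil, List.mem_singleton] at hs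
      subst hs
      exact hlT
  | append_singleton t p ih =>
    rcases p with ⟨a, y⟩
    intro hcons
    rw [consistent_snoc_iff] at hcons
    obtain ⟨hct, hact, hδ⟩ := hcons
    obtain ⟨⟨h₀, hc₀, hR₀, hxP⟩, hT⟩ := ih hct
    set x := lastState l t with hx
    set m := (M.memRun M.updF ({l} : Finset L) l t).1 with hm
    set P := m.filter fun z => M.obs z = M.obs x with hP
    have hβ : (M.betaS α l) l t = PMF.pure (M.act α l P) := by
      simp only [betaS, fmStrategy, nextF, M.memRun_snd]
      rfl
    have ha : a = M.act α l P := by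
      rw [hβ] at hact
      by_contra hne
      simp [PMF.pure_apply, hne] at hact
    have hGP : ∃ a', M.GoodAct α l P a' := by
      obtain ⟨a₀, ha₀⟩ := (α l h₀).support_nonempty
      exact ⟨a₀, h₀, hc₀, hR₀, ha₀⟩
    obtain ⟨h₁, hc₁, hR₁, ha₁⟩ : M.GoodAct α l P a := ha ▸ M.act_spec α l hGP
    set s := M.sigOf h₁ with hs
    have hrun : M.memRun M.updF ({l} : Finset L) l (t ++ [(a, y)])
        = (M.updF m (M.obs x) a, y) := by
      rw [M.memRun_snoc, M.memRun_snd]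
    have hlast' : lastState l (t ++ [(a, y)]) = y := lastState_append_singleton l t a y
    set P' := (M.updF m (M.obs x) a).filter fun z => M.obs z = M.obs y with hP'
    have hupd : ∀ z : L, z ∈ M.updF m (M.obs x) a ↔ ∃ x' ∈ P, 0 < M.δ x' a z := by
      intro z
      rw [updF, mem_postF]
    have hmemP' : ∀ z : L, z ∈ P' ↔ (∃ x' ∈ P, 0 < M.δ x' a z) ∧ M.obs z = M.obs y := by
      intro z
      rw [hP', Finset.mem_filter, hupd]
    have hkey : M.ReachA α l (s ++ [(a, M.obs y)]) = ↑P' := by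
      ext z
      simp only [Set.mem_setOf_eq, Finset.mem_coe, hmemP']
      constructor
      · rintro ⟨h₃, hsig₃, hc₃, hl₃⟩
        rcases h₃.eq_nil_or_concat' with rfl | ⟨h₄, ⟨a₄, z₄⟩, rfl⟩
        · simp [sigOf] at hsig₃
        · rw [sigOf_append_singleton] at hsig₃
          obtain ⟨e₁, e₂⟩ := List.append_inj' hsig₃ rfl
          simp only [List.cons.injEq, Prod.mk.injEq, and_true] at e₂
          obtain ⟨ea, eo⟩ := e₂
          rw [consistent_snoc_iff] at hc₃
          obtain ⟨hc₄, _, hδ₄⟩ := hc₃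
          rw [lastState_append_singleton] at hl₃
          subst hl₃
          have hx₄ : lastState l h₄ ∈ P := by
            have : lastState l h₄ ∈ M.ReachA α l s := ⟨h₄, e₁, hc₄, rfl⟩
            rw [hR₁] at this
            exact this
          subst ea
          exact ⟨⟨lastState l h₄, hx₄, hδ₄⟩, eo⟩
      · rintro ⟨⟨x', hx'P, hδ'⟩, hoz⟩
        have hx'R : x' ∈ M.ReachA α l s := by rw [hR₁]; exact hx'P
        obtain ⟨h₂, hsig₂, hc₂, hl₂⟩ := hx'R
        have heq : α l h₂ = α l h₁ := M.obs_eq_of_sig hα l (by rw [hsig₂])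
        have hpos : 0 < α l h₂ a := by
          rw [heq]
          exact pos_iff_ne_zero.mpr (PMF.mem_support_iff _ _ |>.mp ha₁)
        refine ⟨h₂ ++ [(a, z)], ?_, ?_, lastState_append_singleton l h₂ a z⟩
        · rw [sigOf_append_singleton, hsig₂, hoz]
        · rw [consistent_snoc_iff]
          exact ⟨hc₂, hpos, hl₂ ▸ hδ'⟩
    have hyP' : y ∈ P' := by
      rw [hmemP']
      exact ⟨⟨x, hxP, hδ⟩, rfl⟩
    have hyR : y ∈ M.ReachA α l (s ++ [(a, M.obs y)]) := by
      rw [hkey]; exact hyP'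
    obtain ⟨h', hsig', hc', hl'⟩ := hyR
    have hyT : y ∈ T := by
      have := M.consistent_safe α l T hsafe h' hc' (lastState l h')
        (lastState_mem_statesOf l h')
      rwa [hl'] at this
    constructor
    · refine ⟨h', hc', ?_, ?_⟩
      · rw [hsig', hkey, hrun, hlast']
      · rw [hrun, hlast']
        exact hyP'
    · intro s' hs'
      rw [statesOf_append_singleton, List.mem_append] at hs'
      rcases hs' with hs' | hs'
      · exact hT s' hs'
      · simp only [List.mem_singleton] at hs'
        subst hs'
        exact hyT

end POMDP

/-- If there is an observation-based strategy almost-sure winning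
for `Safe(T)` from `l`, then there is a pure observation-based finite-memory
strategy, with memory of size at most `2^{|L|}`, that is almost-sure winning
for `Safe(T)` from `l`. -/
theorem almost_safe_pure_exponential_memory {L A O : Type} [Fintype L] [Fintype A]
    (M : POMDP L A O) (T : Set L) (l : L)
    (h : ∃ α : POMDP.Strategy L A, M.ObservationBased α ∧ M.safeProb α l T = 1) :
    ∃ (Mem : Type) (iM : Fintype Mem) (m0 : Mem) (u : Mem → O → A → Mem)
      (next : Mem → O → A),
      @Fintype.card Mem iM ≤ 2 ^ Fintype.card L ∧
      POMDP.PureStrategy (M.fmStrategy u (fun m o => PMF.pure (next m o)) m0) ∧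
      M.ObservationBased (M.fmStrategy u (fun m o => PMF.pure (next m o)) m0) ∧
      M.safeProb (M.fmStrategy u (fun m o => PMF.pure (next m o)) m0) l T = 1 := by
  classical
  obtain ⟨α, hα, hsafe⟩ := h
  have hA : Nonempty A := ⟨((α l []).support_nonempty).choose⟩
  refine ⟨Finset L, inferInstance, ({l} : Finset L), M.updF, M.nextF α l, ?_, ?_, ?_, ?_⟩
  · simp [Fintype.card_finset]
  · intro l' h'
    exact ⟨_, rfl⟩
  · exact POMDP.fmStrategy_observationBased M _ _ _
  · have hβ : M.fmStrategy M.updF (fun m o => PMF.pure (M.nextF α l m o)) ({l} : Finset L)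
        = M.betaS α l := rfl
    rw [hβ]
    have hone : ∀ n, M.horizonProb (M.betaS α l) l n
        (fun h => ∀ s ∈ POMDP.statesOf l h, s ∈ T) = 1 :=
      fun n => M.horizonProb_eq_one _ l n _
        (fun h hc => (M.invariant α hα l T hsafe h hc).2)
    unfold POMDP.safeProb
    simp [hone]
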